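/- In the partial suppression setup, the support of every single item of I is unchanged: for every x ∈ I, s({x}, R') = s({x}, R). -/

import Mathlib

variable {α : Type*} [DecidableEq α]

/-- Support of an itemset `I` in a record chunk `R`: the number of records
of `R`, counted with multiplicity, that are supersets of `I`. -/
def supp (I : Finset α) (R : Multiset (Finset α)) : ℕ :=
  (R.filter fun r => I ⊆ r).card

theorem partial_suppression_single_support
    (I : Finset α) (hI : 2 ≤ I.card)
    (c : ℕ) (hc : c = (I.card + 1) / 2)
    (P : Fin c → Finset α)
    (hPdisj : ∀ i j : Fin c, i ≠ j → Disjoint (P i) (P j))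
    (hPne : ∀ i : Fin c, (P i).Nonempty)
    (hPcard : ∀ i : Fin c, (P i).card ≤ 2)
    (hPunion : Finset.univ.biUnion P = I)
    (L₁ L₂ : Finset α)
    (hLunion : L₁ ∪ L₂ = I) (hLdisj : L₁ ∩ L₂ = ∅)
    (hsplit : ∀ i : Fin c, (P i).card = 2 →
      (P i ∩ L₁).card = 1 ∧ (P i ∩ L₂).card = 1)
    (R : Multiset (Finset α))
    (hR : c • ({I} : Multiset (Finset α)) ≤ R)
    (R' : Multiset (Finset α))
    (hR' : R' = (R - c • ({I} : Multiset (Finset α)))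
      + (Finset.univ.val.map fun i : Fin c => I \ P i)
      + {L₁, L₂})
    :
    ∀ x ∈ I, supp {x} R' = supp {x} R := by
  intro x hx
  have hc1 : 1 ≤ c := by omega
  -- the unique part containing x
  obtain ⟨i₀, hi₀⟩ : ∃ i, x ∈ P i := by
    have hx' : x ∈ Finset.univ.biUnion P := hPunion ▸ hx
    simpa using Finset.mem_biUnion.mp hx'
  have huniq : ∀ j, x ∈ P j → j = i₀ := by
    intro j hj
    by_contra h
    exact Finset.disjoint_left.mp (hPdisj j i₀ h) hj hi₀
  -- decompose R
  have hRdec : R = (R - c • ({I} : Multiset (Finset α))) + c • ({I} : Multiset (Finset α)) :=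
    (tsub_add_cancel_of_le hR).symm
  have hsubI : ({x} : Finset α) ⊆ I := Finset.singleton_subset_iff.mpr hx
  have hsuppI : supp {x} (c • ({I} : Multiset (Finset α))) = c := by
    simp only [supp, Multiset.nsmul_singleton]
    rw [Multiset.filter_eq_self.mpr, Multiset.card_replicate]
    intro r hr
    rw [Multiset.eq_of_mem_replicate hr]
    exact hsubI
  -- support in the map part
  have hmap : supp {x} (Finset.univ.val.map fun i : Fin c => I \ P i) = c - 1 := by
    rw [supp, Multiset.filter_map, Multiset.card_map]
    have : (Multiset.filter ((fun r => ({x}:Finset α) ⊆ r) ∘ fun i : Fin c => I \ P i)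
        Finset.univ.val) = (Finset.univ.filter fun i : Fin c => x ∉ P i).val := by
      simp [Finset.filter_val, Function.comp, Finset.singleton_subset_iff,
        Finset.mem_sdiff, hx]
    rw [this]
    have hpos : (Finset.univ.filter fun i : Fin c => x ∈ P i) = {i₀} := by
      ext j
      simp only [Finset.mem_filter, Finset.mem_univ, true_and, Finset.mem_singleton]
      exact ⟨fun hj => huniq j hj, fun hj => hj ▸ hi₀⟩
    have hsplitcard := Finset.card_filter_add_card_filter_not
      (s := (Finset.univ : Finset (Fin c))) (p := fun i => x ∈ P i)
    rw [hpos] at hsplitcard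
    simp only [Finset.card_singleton, Finset.card_univ, Fintype.card_fin] at hsplitcard
    have : (Finset.filter (fun i : Fin c => ¬ x ∈ P i) Finset.univ).card = c - 1 := by omega
    exact this
  -- support in {L₁, L₂}
  have hL : supp {x} ({L₁, L₂} : Multiset (Finset α)) = 1 := by
    have hxL : x ∈ L₁ ∪ L₂ := hLunion ▸ hx
    have hnot : ¬ (x ∈ L₁ ∧ x ∈ L₂) := by
      intro ⟨h1, h2⟩
      have : x ∈ L₁ ∩ L₂ := Finset.mem_inter.mpr ⟨h1, h2⟩
      simp [hLdisj] at this
    rcases Finset.mem_union.mp hxL with h1 | h2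
    · have h2 : x ∉ L₂ := fun h => hnot ⟨h1, h⟩
      simp [supp, Multiset.filter_cons, Finset.singleton_subset_iff, Multiset.filter_singleton, h1, h2]
    · have h1 : x ∉ L₁ := fun h => hnot ⟨h, h2⟩
      simp [supp, Multiset.filter_cons, Finset.singleton_subset_iff, Multiset.filter_singleton, h1, h2]
  have hadd : ∀ A B : Multiset (Finset α), supp {x} (A + B) = supp {x} A + supp {x} B := by
    intro A B
    simp [supp, Multiset.filter_add]
  rw [hR', hadd, hadd, hmap, hL]
  conv_rhs => rw [hRdec]
  rw [hadd, hsuppI]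
  omega
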